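/- For every integer d ≥ 2 and every real z ≥ 0, the first Riesz-mean of the Laplacian eigenvalues on the d-sphere satisfies R₁(z) ≥ (4/((d+2)·d!))·( z^{d/2+1} + (d(d−2)(d+2)/12)·z^{d/2} ). -/

import Mathlib

/-- Multiplicity of the eigenvalue `l(l+d−1)` of the Laplacian on the `d`-sphere:
`m_{l,d} = C(d+l, l) − C(d+l−2, l−2)`, the second term being `0` for `l < 2`. -/
noncomputable def sphereMult (d l : ℕ) : ℝ :=
  (Nat.choose (d + l) l : ℝ) - if 2 ≤ l then (Nat.choose (d + l - 2) (l - 2) : ℝ) else 0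

/-- First Riesz-mean of the Laplacian eigenvalues on the `d`-sphere. -/
noncomputable def R1Sd (d : ℕ) (z : ℝ) : ℝ :=
  ∑' l : ℕ, sphereMult d l * max (z - (l : ℝ) * ((l : ℝ) + (d : ℝ) - 1)) 0

open Finset

noncomputable def pp (a : ℝ) (n : ℕ) : ℝ := ∏ i ∈ Finset.range n, (a + 1 + i)

lemma pp_zero (a : ℝ) : pp a 0 = 1 := by simp [pp]

lemma pp_succ (a : ℝ) (n : ℕ) : pp a (n+1) = pp a n * (a + 1 + n) := by
  simp [pp, Finset.prod_range_succ]

lemma pp_succ' (a : ℝ) (n : ℕ) : pp a (n+1) = (a + 1) * pp (a+1) n := by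
  rw [pp, Finset.prod_range_succ', mul_comm]
  have h1 : a + 1 + (0:ℕ) = a + 1 := by norm_num
  rw [h1]
  congr 1
  rw [pp]
  apply Finset.prod_congr rfl
  intro i _
  push_cast; ring

lemma pp_nonneg {a : ℝ} (ha : 0 ≤ a) (n : ℕ) : 0 ≤ pp a n := by
  apply Finset.prod_nonneg
  intro i _
  positivity

lemma pp_factorial (a n : ℕ) : pp (a : ℝ) n * (Nat.factorial a : ℝ) = (Nat.factorial (a+n) : ℝ) := by
  induction n with
  | zero => simp [pp_zero]
  | succ n ih =>
      rw [pp_succ, show a + (n+1) = (a+n)+1 by ring, Nat.factorial_succ]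
      push_cast
      nlinarith [ih]

lemma choose_cast (l d : ℕ) : (Nat.choose (l+d) d : ℝ) * (Nat.factorial d : ℝ) = pp (l : ℝ) d := by
  have h := Nat.choose_mul_factorial_mul_factorial (Nat.le_add_left d l)
  have h2 : (l + d) - d = l := by omega
  rw [h2] at h
  have := pp_factorial l d
  have hl : (Nat.factorial l : ℝ) ≠ 0 := by
    have := Nat.factorial_pos l
    positivity
  apply mul_right_cancel₀ hl
  calc ((l+d).choose d : ℝ) * (Nat.factorial d : ℝ) * (Nat.factorial l : ℝ)
      = (((l+d).choose d * Nat.factorial d * Nat.factorial l : ℕ) : ℝ) := by push_cast; try ring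
    _ = ((Nat.factorial (l+d) : ℕ) : ℝ) := by rw [h]
    _ = pp (l:ℝ) d * (Nat.factorial l : ℝ) := by rw [← pp_factorial l d]


noncomputable def lamd (d L : ℕ) : ℝ := (L : ℝ) * ((L : ℝ) + (d : ℝ) - 1)
noncomputable def Nr (d L : ℕ) : ℝ := ∑ l ∈ Finset.range (L+1), sphereMult d l
noncomputable def Sr (d L : ℕ) : ℝ := ∑ l ∈ Finset.range (L+1), sphereMult d l * lamd d l
noncomputable def FF (d L : ℕ) : ℝ :=
  4 / (((d:ℝ)+2) * (Nat.factorial d : ℝ)) * lamd d L *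
    ((2*(L:ℝ)+(d:ℝ)) * (2*(L:ℝ)+(d:ℝ)-2) / 4) * pp (L:ℝ) (d-2)

lemma mult_nonneg (d l : ℕ) : 0 ≤ sphereMult d l := by
  unfold sphereMult
  by_cases h : 2 ≤ l
  · rw [if_pos h]
    obtain ⟨j, rfl⟩ : ∃ j, l = j + 2 := ⟨l - 2, by omega⟩
    have h1 : (d+j).choose j ≤ (d+j+1).choose (j+1) := by
      rw [Nat.choose_succ_succ]; exact Nat.le_add_right _ _
    have h2 : (d+j+1).choose (j+1) ≤ (d+j+2).choose (j+2) := by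
      rw [Nat.choose_succ_succ]; exact Nat.le_add_right _ _
    have h3 : d + (j+2) - 2 = d + j := by omega
    have h4 : j + 2 - 2 = j := by omega
    rw [h3, h4, sub_nonneg, show d + (j+2) = d+j+2 by omega]
    exact_mod_cast h1.trans h2
  · rw [if_neg h, sub_zero]
    positivity

lemma mult_zero (d : ℕ) : sphereMult d 0 = 1 := by
  simp [sphereMult]

lemma mult_one (d : ℕ) : sphereMult d 1 = (d:ℝ) + 1 := by
  simp [sphereMult, Nat.choose_one_right]

lemma mult_cast (d j : ℕ) :
    sphereMult d (j+2) * (Nat.factorial d : ℝ) = pp ((j:ℝ)+2) d - pp (j:ℝ) d := by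
  unfold sphereMult
  rw [if_pos (by omega : 2 ≤ j + 2)]
  have h3 : d + (j+2) - 2 = j + d := by omega
  have h4 : j + 2 - 2 = j := by omega
  have h5 : d + (j+2) = (j+2) + d := by omega
  have c1 : (Nat.choose (d+(j+2)) (j+2) : ℝ) = (Nat.choose ((j+2)+d) d : ℝ) := by
    rw [h5, Nat.choose_symm_add]
  have c2 : (Nat.choose (d+(j+2)-2) (j+2-2) : ℝ) = (Nat.choose (j+d) d : ℝ) := by
    rw [h3, h4, Nat.choose_symm_add]
  rw [c1, c2, sub_mul, choose_cast, choose_cast]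
  push_cast
  ring_nf

lemma pp_arg {a b : ℝ} (n : ℕ) (h : a = b) : pp a n = pp b n := by rw [h]

lemma fact_succ_cast (k : ℕ) :
    (Nat.factorial (k+1) : ℝ) = ((k:ℝ)+1) * (Nat.factorial k : ℝ) := by
  rw [Nat.factorial_succ]; push_cast; ring

lemma pp_zero_fact (n : ℕ) : pp (0:ℝ) n = (Nat.factorial n : ℝ) := by
  have := pp_factorial 0 n
  norm_num at this
  exact this

lemma NrEq (d : ℕ) (hd : 2 ≤ d) :
    ∀ L, Nr d L * (Nat.factorial d : ℝ) = (2*(L:ℝ)+(d:ℝ)) * pp (L:ℝ) (d-1) := by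
  obtain ⟨k, rfl⟩ : ∃ k, d = k + 2 := ⟨d - 2, by omega⟩
  rw [show (k+2)-1 = k+1 by omega]
  intro L
  induction L with
  | zero =>
      have h2 : Nr (k+2) 0 = 1 := by simp [Nr, mult_zero]
      rw [h2]
      push_cast
      rw [pp_zero_fact, fact_succ_cast (k+1), fact_succ_cast k]
      push_cast; ring
  | succ L ih =>
      have hNs : Nr (k+2) (L+1) = Nr (k+2) L + sphereMult (k+2) (L+1) := by
        rw [Nr, Nr, Finset.sum_range_succ]
      match L, ih with
      | 0, ih =>
          rw [hNs, mult_one, add_mul, ih]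
          push_cast
          norm_num
          rw [pp_zero_fact]
          have e1 : pp (1:ℝ) (k+1) = (Nat.factorial (k+2) : ℝ) := by
            have h := pp_factorial 1 (k+1)
            rw [show 1+(k+1) = k+2 by omega] at h
            norm_num at h
            exact h
          rw [e1, fact_succ_cast (k+1), fact_succ_cast k]
          push_cast; ring
      | (M+1), ih =>
          rw [hNs, show M+1+1 = M+2 by omega]
          have hm := mult_cast (k+2) M
          push_cast at ih hm ⊢
          have c1 : ((M:ℝ)+1+1) = (M:ℝ)+2 := by ring
          have e1 : pp ((M:ℝ)+2) (k+1) = pp ((M:ℝ)+2) k * ((M:ℝ)+2+1+(k:ℝ)) := pp_succ _ k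
          have e2 : pp ((M:ℝ)+1) (k+1) = ((M:ℝ)+2) * pp ((M:ℝ)+2) k := by
            have := pp_succ' ((M:ℝ)+1) k
            rw [pp_arg k c1] at this
            rw [this, c1]
          have e3 : pp ((M:ℝ)+2) (k+2) = pp ((M:ℝ)+2) k * ((M:ℝ)+2+1+(k:ℝ)) * ((M:ℝ)+2+1+((k:ℝ)+1)) := by
            rw [show k+2 = (k+1)+1 by omega, pp_succ, e1]
            push_cast; ring
          have e4 : pp ((M:ℝ)) (k+2) = ((M:ℝ)+1) * (((M:ℝ)+2) * pp ((M:ℝ)+2) k) := by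
            rw [show k+2 = (k+1)+1 by omega, pp_succ' (M:ℝ) (k+1), pp_succ' ((M:ℝ)+1) k, pp_arg k c1, c1]
          rw [add_mul, ih, hm, e1, e2, e3, e4]
          ring

lemma FFrec (k L : ℕ) :
    FF (k+2) (L+1) = FF (k+2) L + Nr (k+2) L * (lamd (k+2) (L+1) - lamd (k+2) L) := by
  have hfact : (0:ℝ) < ((k+2).factorial : ℝ) := by positivity
  have hL1 : ((L:ℝ)+1) ≠ 0 := by positivity
  have hN := NrEq (k+2) (by omega) L
  rw [show (k+2)-1 = k+1 by omega] at hN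
  have eA : pp (L:ℝ) (k+1) = ((L:ℝ)+1) * pp ((L:ℝ)+1) k := pp_succ' _ _
  have eB : pp (L:ℝ) (k+1) = pp (L:ℝ) k * ((L:ℝ)+1+(k:ℝ)) := pp_succ _ _
  have hNr : Nr (k+2) L = (2*(L:ℝ)+((k:ℝ)+2)) * (pp (L:ℝ) k * ((L:ℝ)+1+(k:ℝ))) / ((k+2).factorial : ℝ) := by
    rw [eq_div_iff hfact.ne', ← eB]
    push_cast at hN
    linarith [hN]
  have hppL1 : pp ((L:ℝ)+1) k = pp (L:ℝ) k * ((L:ℝ)+1+(k:ℝ)) / ((L:ℝ)+1) := by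
    rw [eq_div_iff hL1, mul_comm _ ((L:ℝ)+1), ← eA, eB]
  unfold FF lamd
  simp only [Nat.add_sub_cancel]
  push_cast
  rw [hppL1, hNr]
  have hk4 : ((k:ℝ)+2+2) ≠ 0 := by positivity
  field_simp
  ring

lemma GF (k : ℕ) : ∀ L, Nr (k+2) L * lamd (k+2) L - Sr (k+2) L = FF (k+2) L := by
  intro L
  induction L with
  | zero =>
      have h0 : lamd (k+2) 0 = 0 := by unfold lamd; push_cast; ring
      unfold Nr Sr FF
      rw [h0]
      simp [h0]
  | succ L ih =>
      have hNs : Nr (k+2) (L+1) = Nr (k+2) L + sphereMult (k+2) (L+1) := by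
        rw [Nr, Nr, Finset.sum_range_succ]
      have hSs : Sr (k+2) (L+1) = Sr (k+2) L + sphereMult (k+2) (L+1) * lamd (k+2) (L+1) := by
        rw [Sr, Sr, Finset.sum_range_succ]
      rw [hNs, hSs, FFrec, ← ih]
      ring

lemma GF' (k L : ℕ) : Nr (k+2) L * lamd (k+2) (L+1) - Sr (k+2) L = FF (k+2) (L+1) := by
  have h := GF k (L+1)
  have hNs : Nr (k+2) (L+1) = Nr (k+2) L + sphereMult (k+2) (L+1) := by
    rw [Nr, Nr, Finset.sum_range_succ]
  have hSs : Sr (k+2) (L+1) = Sr (k+2) L + sphereMult (k+2) (L+1) * lamd (k+2) (L+1) := by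
    rw [Sr, Sr, Finset.sum_range_succ]
  rw [hNs, hSs] at h
  linarith [h]

lemma lamd_nonneg (d L : ℕ) (hd : 2 ≤ d) : 0 ≤ lamd d L := by
  unfold lamd
  have h1 : (2:ℝ) ≤ (d:ℝ) := by exact_mod_cast hd
  have h2 : (0:ℝ) ≤ (L:ℝ) := by positivity
  nlinarith

lemma lamd_ge (d L : ℕ) (hd : 2 ≤ d) : (L:ℝ) ≤ lamd d L := by
  unfold lamd
  have h1 : (2:ℝ) ≤ (d:ℝ) := by exact_mod_cast hd
  have h2 : (0:ℝ) ≤ (L:ℝ) := by positivity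
  nlinarith

lemma truncation (d : ℕ) (hd : 2 ≤ d) (z : ℝ) (L : ℕ) :
    Nr d L * z - Sr d L ≤ R1Sd d z := by
  classical
  set M := L + 1 + Nat.ceil z with hM
  have hvanish : ∀ l ∉ Finset.range M, sphereMult d l * max (z - (l : ℝ) * ((l : ℝ) + (d : ℝ) - 1)) 0 = 0 := by
    intro l hl
    simp only [Finset.mem_range, not_lt] at hl
    have hlz : z ≤ (l:ℝ) := by
      have : (Nat.ceil z : ℝ) ≥ z := Nat.le_ceil z
      have : ((Nat.ceil z : ℕ) : ℝ) ≤ (l:ℝ) := by exact_mod_cast by omega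
      linarith [Nat.le_ceil z]
    have hmax : max (z - (l : ℝ) * ((l : ℝ) + (d : ℝ) - 1)) 0 = 0 := by
      apply max_eq_right
      have := lamd_ge d l hd
      unfold lamd at this
      linarith
    rw [hmax, mul_zero]
  have htsum : R1Sd d z = ∑ l ∈ Finset.range M, sphereMult d l * max (z - (l : ℝ) * ((l : ℝ) + (d : ℝ) - 1)) 0 :=
    tsum_eq_sum hvanish
  set g : ℕ → ℝ := fun l => if l < L + 1 then sphereMult d l * (z - lamd d l) else 0 with hg
  have hsum_le : ∑ l ∈ Finset.range M, g l ≤ ∑ l ∈ Finset.range M, sphereMult d l * max (z - (l : ℝ) * ((l : ℝ) + (d : ℝ) - 1)) 0 := by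
    apply Finset.sum_le_sum
    intro i _
    by_cases hi : i < L + 1
    · simp only [hg, if_pos hi]
      apply mul_le_mul_of_nonneg_left _ (mult_nonneg d i)
      unfold lamd
      exact le_max_left _ _
    · simp only [hg, if_neg hi]
      apply mul_nonneg (mult_nonneg d i) (le_max_right _ _)
  have hgsum : ∑ l ∈ Finset.range M, g l = Nr d L * z - Sr d L := by
    have hsub : Finset.range (L+1) ⊆ Finset.range M := by
      apply Finset.range_subset_range.2; omega
    rw [← Finset.sum_subset hsub]
    · have : ∀ l ∈ Finset.range (L+1), g l = sphereMult d l * z - sphereMult d l * lamd d l := by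
        intro l hl
        simp only [Finset.mem_range] at hl
        simp only [hg, if_pos hl]
        ring
      rw [Finset.sum_congr rfl this, Finset.sum_sub_distrib, ← Finset.sum_mul]
      rfl
    · intro x _ hx
      simp only [Finset.mem_range, not_lt] at hx
      simp only [hg, if_neg (by omega : ¬ x < L + 1)]
  rw [htsum, ← hgsum]
  exact hsum_le

lemma bracket (d : ℕ) (hd : 2 ≤ d) (z : ℝ) (hz : 0 ≤ z) :
    ∃ L, lamd d L ≤ z ∧ z ≤ lamd d (L+1) := by
  have key : ∀ n : ℕ, z ≤ lamd d n → ∃ L, lamd d L ≤ z ∧ z ≤ lamd d (L+1) := by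
    intro n
    induction n with
    | zero =>
        intro h
        have h0 : lamd d 0 = 0 := by unfold lamd; push_cast; ring
        rw [h0] at h
        exact ⟨0, by rw [h0]; exact hz, by
          have := lamd_nonneg d 1 hd
          linarith⟩
    | succ n ih =>
        intro h
        by_cases hc : lamd d n ≤ z
        · exact ⟨n, hc, h⟩
        · exact ih (le_of_not_ge hc)
  apply key (Nat.ceil z)
  calc z ≤ (Nat.ceil z : ℝ) := Nat.le_ceil z
    _ ≤ lamd d (Nat.ceil z) := lamd_ge d _ hd

-- sum of i and i^2 over range
lemma sum_range_cast (n : ℕ) : ∑ i ∈ Finset.range n, (i:ℝ) = n*(n-1)/2 := by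
  induction n with
  | zero => simp
  | succ n ih => rw [Finset.sum_range_succ, ih]; push_cast; ring

lemma sum_range_sq_cast (n : ℕ) : ∑ i ∈ Finset.range n, (i:ℝ)^2 = n*(n-1)*(2*n-1)/6 := by
  induction n with
  | zero => simp
  | succ n ih => rw [Finset.sum_range_succ, ih]; push_cast; ring

-- (sum)^2 ≥ sum of squares for nonneg
lemma sq_sum_ge (n : ℕ) (g : ℕ → ℝ) (hg : ∀ i < n, 0 ≤ g i) :
    ∑ i ∈ Finset.range n, (g i)^2 ≤ (∑ i ∈ Finset.range n, g i)^2 := by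
  induction n with
  | zero => simp
  | succ n ih =>
      rw [Finset.sum_range_succ, Finset.sum_range_succ]
      have h1 : 0 ≤ ∑ i ∈ Finset.range n, g i :=
        Finset.sum_nonneg (fun i hi => hg i (by simp at hi; omega))
      have h2 : 0 ≤ g n := hg n (by omega)
      have h3 := ih (fun i hi => hg i (by omega))
      nlinarith

-- main product lower bound
lemma prod_lb : ∀ (n : ℕ) (g : ℕ → ℝ) (lam : ℝ), 0 ≤ lam → (∀ i < n + 2, 0 ≤ g i) →
    lam^n * (lam^2 + (∑ i ∈ Finset.range (n+2), g i) * lam +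
      ((∑ i ∈ Finset.range (n+2), g i)^2 - ∑ i ∈ Finset.range (n+2), (g i)^2)/2)
      ≤ ∏ i ∈ Finset.range (n+2), (lam + g i) := by
  intro n
  induction n with
  | zero =>
      intro g lam hlam hg
      apply le_of_eq
      rw [show (0:ℕ)+2 = 2 from rfl, Finset.prod_range_succ, Finset.prod_range_succ,
        Finset.prod_range_zero, Finset.sum_range_succ, Finset.sum_range_succ,
        Finset.sum_range_zero, Finset.sum_range_succ, Finset.sum_range_succ, Finset.sum_range_zero]
      ring
  | succ n ih =>
      intro g lam hlam hg
      have hsplitP : ∏ i ∈ Finset.range (n+3), (lam + g i)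
          = (∏ i ∈ Finset.range (n+2), (lam + g (i+1))) * (lam + g 0) := by
        rw [Finset.prod_range_succ']
      have hsplitS : ∑ i ∈ Finset.range (n+3), g i
          = (∑ i ∈ Finset.range (n+2), g (i+1)) + g 0 := by
        rw [Finset.sum_range_succ']
      have hsplitQ : ∑ i ∈ Finset.range (n+3), (g i)^2
          = (∑ i ∈ Finset.range (n+2), (g (i+1))^2) + (g 0)^2 := by
        rw [Finset.sum_range_succ']
      set a := ∑ i ∈ Finset.range (n+2), g (i+1) with ha
      set q := ∑ i ∈ Finset.range (n+2), (g (i+1))^2 with hq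
      have hg' : ∀ i < n + 2, 0 ≤ g (i+1) := fun i hi => hg (i+1) (by omega)
      have hIH := ih (fun i => g (i+1)) lam hlam hg'
      have hb : q ≤ a^2 := sq_sum_ge (n+2) (fun i => g (i+1)) hg'
      have hg0 : 0 ≤ g 0 := hg 0 (by omega)
      have hfac : 0 ≤ lam + g 0 := by linarith
      have step1 : (lam + g 0) * (lam^n * (lam^2 + a*lam + (a^2 - q)/2))
          ≤ (lam + g 0) * ∏ i ∈ Finset.range (n+2), (lam + g (i+1)) :=
        mul_le_mul_of_nonneg_left hIH hfac
      rw [hsplitP, hsplitS, hsplitQ]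
      have expand : (lam + g 0) * (lam^n * (lam^2 + a*lam + (a^2 - q)/2))
          = lam^(n+1) * (lam^2 + (a + g 0)*lam + ((a + g 0)^2 - (q + (g 0)^2))/2)
            + g 0 * ((a^2-q)/2) * lam^n := by ring
      have hpos : 0 ≤ g 0 * ((a^2-q)/2) * lam^n := by
        apply mul_nonneg (mul_nonneg hg0 (by linarith)) (pow_nonneg hlam n)
      calc lam^(n+1) * (lam^2 + (a + g 0)*lam + ((a + g 0)^2 - (q + (g 0)^2))/2)
          ≤ (lam + g 0) * (lam^n * (lam^2 + a*lam + (a^2 - q)/2)) := by rw [expand]; linarith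
        _ ≤ (lam + g 0) * ∏ i ∈ Finset.range (n+2), (lam + g (i+1)) := step1
        _ = (∏ i ∈ Finset.range (n+2), (lam + g (i+1))) * (lam + g 0) := by ring

lemma prod_lb2 (n : ℕ) (g : ℕ → ℝ) (lam c : ℝ) (hlam : 0 ≤ lam)
    (hg : ∀ i < n + 2, 0 ≤ g i) (hbd : ∀ i < n + 2, g i ≤ c)
    (hsum : ∑ i ∈ Finset.range (n+2), g i = 2*c) :
    lam^n * (lam + c)^2 ≤ ∏ i ∈ Finset.range (n+2), (lam + g i) := by
  have h1 := prod_lb n g lam hlam hg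
  rw [hsum] at h1
  have hq : ∑ i ∈ Finset.range (n+2), (g i)^2 ≤ 2*c^2 := by
    have : ∑ i ∈ Finset.range (n+2), (g i)^2 ≤ ∑ i ∈ Finset.range (n+2), c * g i := by
      apply Finset.sum_le_sum
      intro i hi
      simp only [Finset.mem_range] at hi
      have := hg i hi
      have := hbd i hi
      nlinarith
    rw [← Finset.mul_sum, hsum] at this
    nlinarith
  have h2 : lam^n * (lam + c)^2 ≤ lam^n * (lam^2 + (2*c)*lam + ((2*c)^2 - ∑ i ∈ Finset.range (n+2), (g i)^2)/2) := by
    apply mul_le_mul_of_nonneg_left _ (pow_nonneg hlam n)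
    nlinarith
  linarith

noncomputable def gk (k : ℕ) : ℕ → ℝ
  | 0 => (k:ℝ)*((k:ℝ)+2)/4
  | 1 => (k:ℝ)*((k:ℝ)+2)/4
  | (j+2) => (1+(j:ℝ))*((k:ℝ)-(j:ℝ))

lemma gk_sum (k : ℕ) : ∑ i ∈ Finset.range (k+2), gk k i = 2 * ((k:ℝ)*((k:ℝ)+2)*((k:ℝ)+4)/12) := by
  rw [Finset.sum_range_succ', Finset.sum_range_succ']
  have h1 : ∀ i ∈ Finset.range k, gk k ((i+1)+1) = (k:ℝ) + ((k:ℝ)-1)*(i:ℝ) - (i:ℝ)^2 := by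
    intro i _
    show (1+(i:ℝ))*((k:ℝ)-(i:ℝ)) = _
    ring
  rw [Finset.sum_congr rfl h1]
  have expand : ∑ i ∈ Finset.range k, ((k:ℝ) + ((k:ℝ)-1)*(i:ℝ) - (i:ℝ)^2)
      = (k:ℝ)*(k:ℝ) + ((k:ℝ)-1) * (∑ i ∈ Finset.range k, (i:ℝ)) - ∑ i ∈ Finset.range k, (i:ℝ)^2 := by
    rw [Finset.sum_sub_distrib, Finset.sum_add_distrib, ← Finset.mul_sum, Finset.sum_const]
    simp [mul_comm]
  rw [expand, sum_range_cast, sum_range_sq_cast]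
  show _ + gk k 1 + gk k 0 = _
  show _ + (k:ℝ)*((k:ℝ)+2)/4 + (k:ℝ)*((k:ℝ)+2)/4 = _
  ring

lemma gk_nonneg (k : ℕ) : ∀ i < k + 2, 0 ≤ gk k i := by
  intro i hi
  match i with
  | 0 => show (0:ℝ) ≤ (k:ℝ)*((k:ℝ)+2)/4; positivity
  | 1 => show (0:ℝ) ≤ (k:ℝ)*((k:ℝ)+2)/4; positivity
  | (j+2) =>
      show (0:ℝ) ≤ (1+(j:ℝ))*((k:ℝ)-(j:ℝ))
      have hj : j < k := by omega
      have : (j:ℝ) ≤ (k:ℝ) - 1 := by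
        have : (j:ℝ)+1 ≤ (k:ℝ) := by exact_mod_cast hj
        linarith
      have : (0:ℝ) ≤ (j:ℝ) := by positivity
      nlinarith

lemma gk_bd (k : ℕ) : ∀ i < k + 2, gk k i ≤ (k:ℝ)*((k:ℝ)+2)*((k:ℝ)+4)/12 := by
  intro i hi
  have hk0 : (0:ℝ) ≤ (k:ℝ) := by positivity
  match i with
  | 0 =>
      show (k:ℝ)*((k:ℝ)+2)/4 ≤ _
      nlinarith [mul_nonneg (mul_nonneg hk0 (by linarith : (0:ℝ) ≤ (k:ℝ)+2)) (by linarith : (0:ℝ) ≤ (k:ℝ)+1)]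
  | 1 =>
      show (k:ℝ)*((k:ℝ)+2)/4 ≤ _
      nlinarith [mul_nonneg (mul_nonneg hk0 (by linarith : (0:ℝ) ≤ (k:ℝ)+2)) (by linarith : (0:ℝ) ≤ (k:ℝ)+1)]
  | (j+2) =>
      show (1+(j:ℝ))*((k:ℝ)-(j:ℝ)) ≤ _
      have hj : j < k := by omega
      have hjk : (j:ℝ)+1 ≤ (k:ℝ) := by exact_mod_cast hj
      have hj0 : (0:ℝ) ≤ (j:ℝ) := by positivity
      have hk1 : (1:ℝ) ≤ (k:ℝ) := by linarith
      nlinarith [sq_nonneg (2*(j:ℝ) - (k:ℝ) + 1), sq_nonneg ((k:ℝ)-1)]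

lemma pp_sq (k L : ℕ) :
    (pp (L:ℝ) k)^2 = ∏ i ∈ Finset.range k, (lamd (k+2) L + (1+(i:ℝ))*((k:ℝ)-(i:ℝ))) := by
  have hrefl : pp (L:ℝ) k = ∏ i ∈ Finset.range k, ((L:ℝ) + 1 + ((k - 1 - i : ℕ) : ℝ)) := by
    rw [pp]
    exact (Finset.prod_range_reflect (fun i => (L:ℝ) + 1 + (i:ℝ)) k).symm
  have : (pp (L:ℝ) k)^2 = ∏ i ∈ Finset.range k, (((L:ℝ) + 1 + (i:ℝ)) * ((L:ℝ) + 1 + ((k - 1 - i : ℕ) : ℝ))) := by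
    rw [sq]
    nth_rewrite 2 [hrefl]
    rw [pp, ← Finset.prod_mul_distrib]
  rw [this]
  apply Finset.prod_congr rfl
  intro i hi
  simp only [Finset.mem_range] at hi
  have hcast : ((k - 1 - i : ℕ) : ℝ) = (k:ℝ) - 1 - (i:ℝ) := by
    have : k - 1 - i = k - (1 + i) := by omega
    rw [this, Nat.cast_sub (by omega)]
    push_cast; ring
  rw [hcast]
  unfold lamd
  push_cast
  ring

lemma core_ineq (k L : ℕ) :
    lamd (k+2) L ^ k * (lamd (k+2) L + (k:ℝ)*((k:ℝ)+2)*((k:ℝ)+4)/12)^2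
      ≤ (((2*(L:ℝ)+((k:ℝ)+2)) * (2*(L:ℝ)+(k:ℝ)) / 4) * pp (L:ℝ) k)^2 := by
  have hlam : 0 ≤ lamd (k+2) L := by
    unfold lamd
    push_cast
    have h1 : (0:ℝ) ≤ (L:ℝ) := by positivity
    have h2 : (0:ℝ) ≤ (k:ℝ) := by positivity
    nlinarith
  have key := prod_lb2 k (gk k) (lamd (k+2) L) ((k:ℝ)*((k:ℝ)+2)*((k:ℝ)+4)/12)
      hlam (gk_nonneg k) (gk_bd k) (gk_sum k)
  have hprod : ∏ i ∈ Finset.range (k+2), (lamd (k+2) L + gk k i)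
      = (((2*(L:ℝ)+((k:ℝ)+2)) * (2*(L:ℝ)+(k:ℝ)) / 4) * pp (L:ℝ) k)^2 := by
    rw [Finset.prod_range_succ', Finset.prod_range_succ']
    have h1 : ∀ i ∈ Finset.range k, lamd (k+2) L + gk k ((i+1)+1)
        = lamd (k+2) L + (1+(i:ℝ))*((k:ℝ)-(i:ℝ)) := by
      intro i _; rfl
    rw [Finset.prod_congr rfl h1, ← pp_sq]
    show (pp (L:ℝ) k)^2 * (lamd (k+2) L + (k:ℝ)*((k:ℝ)+2)/4) * (lamd (k+2) L + (k:ℝ)*((k:ℝ)+2)/4) = _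
    unfold lamd
    push_cast
    ring
  rw [← hprod]
  exact key

lemma FFlower (k : ℕ) (L : ℕ) :
    4 / ((((k:ℝ)+2)+2) * (Nat.factorial (k+2) : ℝ)) *
      (lamd (k+2) L ^ (((k:ℝ)+2)/2 + 1) +
        (((k:ℝ)+2)*(((k:ℝ)+2)-2)*(((k:ℝ)+2)+2)/12) * lamd (k+2) L ^ (((k:ℝ)+2)/2))
    ≤ FF (k+2) L := by
  match L with
  | 0 =>
      have h0 : lamd (k+2) 0 = 0 := by unfold lamd; push_cast; ring
      rw [h0]
      have e1 : (0:ℝ) ^ (((k:ℝ)+2)/2 + 1) = 0 := by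
        apply Real.zero_rpow; positivity
      have e2 : (0:ℝ) ^ (((k:ℝ)+2)/2) = 0 := by
        apply Real.zero_rpow; positivity
      rw [e1, e2]
      unfold FF
      rw [h0]
      norm_num
  | (M+1) =>
      have hM0 : (0:ℝ) ≤ (M:ℝ) := by positivity
      have hk0 : (0:ℝ) ≤ (k:ℝ) := by positivity
      set lam := lamd (k+2) (M+1) with hlamdef
      have hlam : 0 < lam := by
        rw [hlamdef]; unfold lamd; push_cast
        nlinarith
      set c' : ℝ := (k:ℝ)*((k:ℝ)+2)*((k:ℝ)+4)/12 with hc'def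
      have hc' : 0 ≤ c' := by rw [hc'def]; positivity
      set Q : ℝ := (2*((M:ℝ)+1)+((k:ℝ)+2)) * (2*((M:ℝ)+1)+(k:ℝ)) / 4 * pp ((M:ℝ)+1) k with hQdef
      have hQ0 : 0 ≤ Q := by
        rw [hQdef]
        have hp := pp_nonneg (show (0:ℝ) ≤ (M:ℝ)+1 by linarith) k
        apply mul_nonneg _ hp
        nlinarith
      set t : ℝ := lam ^ (((k:ℝ)+2)/2 - 1) with htdef
      have ht0 : 0 ≤ t := Real.rpow_nonneg hlam.le _
      have hstep1 : t * (lam + c') ≤ Q := by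
        have htsq : t^2 = lam ^ k := by
          rw [htdef, sq, ← Real.rpow_add hlam]
          have he : ((k:ℝ)+2)/2 - 1 + (((k:ℝ)+2)/2 - 1) = ((k:ℕ):ℝ) := by push_cast; ring
          rw [he, Real.rpow_natCast]
        have hsq : (t * (lam + c'))^2 ≤ Q^2 := by
          have expand : (t * (lam + c'))^2 = t^2 * (lam + c')^2 := by ring
          rw [expand, htsq, hc'def, hQdef]
          have hcore := core_ineq k (M+1)
          rw [← hlamdef] at hcore
          push_cast at hcore
          convert hcore using 3 <;> push_cast <;> ring
        have ha : 0 ≤ t * (lam + c') := mul_nonneg ht0 (by linarith)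
        calc t * (lam + c') = Real.sqrt ((t * (lam + c'))^2) := (Real.sqrt_sq ha).symm
          _ ≤ Real.sqrt (Q^2) := Real.sqrt_le_sqrt hsq
          _ = Q := Real.sqrt_sq hQ0
      have hC : (0:ℝ) ≤ 4 / ((((k:ℝ)+2)+2) * (Nat.factorial (k+2) : ℝ)) := by positivity
      have e1 : lam ^ (((k:ℝ)+2)/2 + 1) = lam ^ (((k:ℝ)+2)/2) * lam := by
        rw [Real.rpow_add hlam, Real.rpow_one]
      have e2 : lam ^ (((k:ℝ)+2)/2) = lam * t := by
        rw [htdef]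
        nth_rewrite 2 [← Real.rpow_one lam]
        rw [← Real.rpow_add hlam]
        congr 1
        ring
      have hFF : FF (k+2) (M+1) = 4 / ((((k:ℝ)+2)+2) * (Nat.factorial (k+2) : ℝ)) * (lam * Q) := by
        unfold FF
        rw [hQdef, ← hlamdef, show (k+2)-2 = k by omega]
        have hppc : pp ((M+1:ℕ):ℝ) k = pp ((M:ℝ)+1) k := by push_cast; rfl
        push_cast
        ring
      rw [e1, e2, hFF]
      have key : lam * (t * (lam + c')) ≤ lam * Q := mul_le_mul_of_nonneg_left hstep1 hlam.le
      calc 4 / ((((k:ℝ)+2)+2) * (Nat.factorial (k+2) : ℝ)) *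
              (lam * t * lam + ((k:ℝ)+2)*(((k:ℝ)+2)-2)*(((k:ℝ)+2)+2)/12 * (lam * t))
          = 4 / ((((k:ℝ)+2)+2) * (Nat.factorial (k+2) : ℝ)) * (lam * (t * (lam + c'))) := by
            rw [hc'def]; ring
        _ ≤ 4 / ((((k:ℝ)+2)+2) * (Nat.factorial (k+2) : ℝ)) * (lam * Q) :=
            mul_le_mul_of_nonneg_left key hC

theorem riesz_mean_sphere_improved_lower_bound (d : ℕ) (hd : 2 ≤ d) (z : ℝ) (hz : 0 ≤ z) :
    R1Sd d z ≥
      4 / (((d : ℝ) + 2) * (Nat.factorial d : ℝ)) *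
        (z ^ ((d : ℝ) / 2 + 1) +
          ((d : ℝ) * ((d : ℝ) - 2) * ((d : ℝ) + 2) / 12) * z ^ ((d : ℝ) / 2)) := by
  rw [ge_iff_le]
  obtain ⟨L, hLa, hLb⟩ := bracket d hd z hz
  obtain ⟨k, rfl⟩ : ∃ k, d = k + 2 := ⟨d - 2, by omega⟩
  push_cast
  have hk0 : (0:ℝ) ≤ (k:ℝ) := by positivity
  set a := lamd (k+2) L with hadef
  set b := lamd (k+2) (L+1) with hbdef
  have hab : a < b := by
    rw [hadef, hbdef]; unfold lamd; push_cast
    have h1 : (0:ℝ) ≤ (L:ℝ) := by positivity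
    nlinarith
  have ha0 : 0 ≤ a := lamd_nonneg (k+2) L (by omega)
  have hb0 : 0 ≤ b := lamd_nonneg (k+2) (L+1) (by omega)
  set θ₁ := (b - z)/(b - a) with hθ₁def
  set θ₂ := (z - a)/(b - a) with hθ₂def
  have hba : 0 < b - a := by linarith
  have hθ₁ : 0 ≤ θ₁ := div_nonneg (by linarith) hba.le
  have hθ₂ : 0 ≤ θ₂ := div_nonneg (by linarith) hba.le
  have hθsum : θ₁ + θ₂ = 1 := by rw [hθ₁def, hθ₂def]; field_simp; ring
  have hcomb : θ₁ * a + θ₂ * b = z := by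
    rw [hθ₁def, hθ₂def]; field_simp; ring
  -- convexity of the two rpow functions
  have hmem_a : a ∈ Set.Ici (0:ℝ) := Set.mem_Ici.mpr ha0
  have hmem_b : b ∈ Set.Ici (0:ℝ) := Set.mem_Ici.mpr hb0
  have hp1 : (1:ℝ) ≤ ((k:ℝ)+2)/2 + 1 := by linarith
  have hp2 : (1:ℝ) ≤ ((k:ℝ)+2)/2 := by linarith
  have s1 : z ^ (((k:ℝ)+2)/2 + 1) ≤ θ₁ * a ^ (((k:ℝ)+2)/2 + 1) + θ₂ * b ^ (((k:ℝ)+2)/2 + 1) := by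
    have := (convexOn_rpow hp1).2 hmem_a hmem_b hθ₁ hθ₂ hθsum
    simpa [smul_eq_mul, hcomb] using this
  have s2 : z ^ (((k:ℝ)+2)/2) ≤ θ₁ * a ^ (((k:ℝ)+2)/2) + θ₂ * b ^ (((k:ℝ)+2)/2) := by
    have := (convexOn_rpow hp2).2 hmem_a hmem_b hθ₁ hθ₂ hθsum
    simpa [smul_eq_mul, hcomb] using this
  set C : ℝ := 4 / ((((k:ℝ)+2) + 2) * (Nat.factorial (k+2) : ℝ)) with hCdef
  have hC : 0 ≤ C := by rw [hCdef]; positivity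
  set c' : ℝ := ((k:ℝ)+2)*(((k:ℝ)+2)-2)*(((k:ℝ)+2)+2)/12 with hc'def
  have hc' : 0 ≤ c' := by
    have hre : c' = (k:ℝ)*((k:ℝ)+2)*((k:ℝ)+4)/12 := by rw [hc'def]; ring
    rw [hre]; positivity
  -- φ z ≤ θ₁ φ a + θ₂ φ b
  set φ : ℝ → ℝ := fun x => C * (x ^ (((k:ℝ)+2)/2 + 1) + c' * x ^ (((k:ℝ)+2)/2)) with hφdef
  have hφz : φ z ≤ θ₁ * φ a + θ₂ * φ b := by
    have t1 := mul_le_mul_of_nonneg_left s1 hC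
    have t2 := mul_le_mul_of_nonneg_left s2 (mul_nonneg hC hc')
    simp only [hφdef]
    nlinarith [t1, t2]
  have hFa := FFlower k L
  have hFb := FFlower k (L+1)
  have hφa : φ a ≤ FF (k+2) L := by
    simp only [hφdef, hCdef, hc'def]
    convert hFa using 3 <;> push_cast <;> ring_nf
  have hφb : φ b ≤ FF (k+2) (L+1) := by
    simp only [hφdef, hCdef, hc'def]
    convert hFb using 3 <;> push_cast <;> ring_nf
  have hcombine : θ₁ * φ a + θ₂ * φ b ≤ θ₁ * FF (k+2) L + θ₂ * FF (k+2) (L+1) :=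
    add_le_add (mul_le_mul_of_nonneg_left hφa hθ₁) (mul_le_mul_of_nonneg_left hφb hθ₂)
  have hlin : θ₁ * FF (k+2) L + θ₂ * FF (k+2) (L+1) = Nr (k+2) L * z - Sr (k+2) L := by
    rw [← GF k L, ← GF' k L]
    linear_combination (Nr (k+2) L) * hcomb - (Sr (k+2) L) * hθsum
  have htrunc := truncation (k+2) (by omega) z L
  have final : φ z ≤ R1Sd (k+2) z := by
    calc φ z ≤ θ₁ * φ a + θ₂ * φ b := hφz
      _ ≤ θ₁ * FF (k+2) L + θ₂ * FF (k+2) (L+1) := hcombine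
      _ = Nr (k+2) L * z - Sr (k+2) L := hlin
      _ ≤ R1Sd (k+2) z := htrunc
  calc 4 / (((k:ℝ) + 2 + 2) * (Nat.factorial (k+2) : ℝ)) *
        (z ^ (((k:ℝ) + 2) / 2 + 1) + (((k:ℝ)+2) * ((k:ℝ)+2-2) * ((k:ℝ)+2+2) / 12) * z ^ (((k:ℝ)+2)/2))
      = φ z := by simp only [hφdef, hCdef, hc'def]
    _ ≤ R1Sd (k+2) z := final
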